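/- If f is μ-strongly convex (μ ≥ 0) then for each λ > 0 the function (1 + λμ) f_λ is μ-strongly convex and its gradient ∇((1+λμ)f_λ)(x) = ((1+λμ)/λ)(x - prox_{λf}(x)) is (μ + 1/λ)-Lipschitz continuous. -/

import Mathlib

open Set Filter Topology InnerProductSpace

private lemma aux_sqCombo {H : Type*} [NormedAddCommGroup H] [InnerProductSpace ℝ H]
    (u v : H) {a b : ℝ} (hab : a + b = 1) :
    ‖a • u + b • v‖ ^ 2 = a * ‖u‖ ^ 2 + b * ‖v‖ ^ 2 - a * b * ‖u - v‖ ^ 2 := by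
  have h1 : ‖a • u + b • v‖ ^ 2 = ⟪a • u + b • v, a • u + b • v⟫_ℝ :=
    (real_inner_self_eq_norm_sq _).symm
  have h2 : ‖u - v‖ ^ 2 = ‖u‖ ^ 2 - 2 * ⟪u, v⟫_ℝ + ‖v‖ ^ 2 := norm_sub_sq_real u v
  have h3 : ⟪u, u⟫_ℝ = ‖u‖ ^ 2 := real_inner_self_eq_norm_sq u
  have h4 : ⟪v, v⟫_ℝ = ‖v‖ ^ 2 := real_inner_self_eq_norm_sq v
  simp only [inner_add_left, inner_add_right, real_inner_smul_left, real_inner_smul_right,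
    real_inner_comm u v] at h1
  rw [h1, h3, h4, h2]
  have hb : b = 1 - a := by linarith
  subst hb; ring

private lemma aux_strongMin {H : Type*} [NormedAddCommGroup H] [InnerProductSpace ℝ H]
    {F : H → ℝ} {m : ℝ} (hF : StrongConvexOn Set.univ m F)
    {p : H} (hp : IsMinOn F Set.univ p) (y : H) :
    F p + m / 2 * ‖y - p‖ ^ 2 ≤ F y := by
  have key : ∀ t : ℝ, t ∈ Set.Ioc (0:ℝ) 1 →
      F p + (1 - t) * (m / 2 * ‖y - p‖ ^ 2) ≤ F y := by
    intro t ht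
    have h1 := hF.2 (Set.mem_univ p) (Set.mem_univ y)
      (show (0:ℝ) ≤ 1 - t by linarith [ht.2]) ht.1.le (by ring)
    have h2 : F p ≤ F ((1 - t) • p + t • y) := hp (Set.mem_univ _)
    simp only [smul_eq_mul] at h1
    rw [norm_sub_rev p y] at h1
    have ht0 : 0 < t := ht.1
    nlinarith [h1, h2]
  have cont : Tendsto (fun t : ℝ => F p + (1 - t) * (m / 2 * ‖y - p‖ ^ 2)) (𝓝[>] (0:ℝ))
      (𝓝 (F p + (1 - 0) * (m / 2 * ‖y - p‖ ^ 2))) :=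
    ((continuous_const.add ((continuous_const.sub continuous_id).mul continuous_const)).tendsto 0).mono_left
      nhdsWithin_le_nhds
  have := le_of_tendsto cont (by
    filter_upwards [Ioc_mem_nhdsGT_of_mem (show (0:ℝ) ∈ Set.Ico (0:ℝ) 1 by norm_num)] with t ht
    exact key t ht)
  simpa using this

set_option linter.unusedSectionVars false
set_option linter.unusedVariables false

section L2
variable {H : Type*} [NormedAddCommGroup H] [InnerProductSpace ℝ H]

private lemma aux_Fstrong {μ : ℝ} {f : H → ℝ} (hf : StrongConvexOn Set.univ μ f)
    {lam : ℝ} (hlam : 0 < lam) (x : H) :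
    StrongConvexOn Set.univ (μ + 1 / lam) (fun y => f y + ‖y - x‖ ^ 2 / (2 * lam)) := by
  refine ⟨convex_univ, ?_⟩
  intro y _ z _ a b ha hb hab
  have h1 := hf.2 (Set.mem_univ y) (Set.mem_univ z) ha hb hab
  simp only [smul_eq_mul] at h1 ⊢
  have h2 : a • y + b • z - x = a • (y - x) + b • (z - x) := by
    have hx : a • (y - x) + b • (z - x) = a • y + b • z - (a + b) • x := by
      rw [smul_sub, smul_sub, add_smul]; abel
    rw [hx, hab, one_smul]
  have h3 := aux_sqCombo (y - x) (z - x) hab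
  rw [show (y - x) - (z - x) = y - z by abel] at h3
  rw [h2, h3]
  have hl : lam ≠ 0 := ne_of_gt hlam
  have hq : (a * ‖y - x‖ ^ 2 + b * ‖z - x‖ ^ 2 - a * b * ‖y - z‖ ^ 2) / (2 * lam)
      = a * (‖y - x‖ ^ 2 / (2 * lam)) + b * (‖z - x‖ ^ 2 / (2 * lam))
        - a * b * ((1 / lam) / 2 * ‖y - z‖ ^ 2) := by
    field_simp
  have hq2 : a * b * ((μ + 1 / lam) / 2 * ‖y - z‖ ^ 2)
      = a * b * (μ / 2 * ‖y - z‖ ^ 2) + a * b * ((1 / lam) / 2 * ‖y - z‖ ^ 2) := by ring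
  linarith [h1]

end L2

section L3
variable {H : Type*} [NormedAddCommGroup H] [InnerProductSpace ℝ H]
variable {μ : ℝ} {f : H → ℝ} {lam : ℝ} {prox : H → H}

private lemma aux_bdd (hprox : ∀ x : H,
      IsMinOn (fun y => f y + ‖y - x‖ ^ 2 / (2 * lam)) Set.univ (prox x)) (x : H) :
    BddBelow (Set.range fun y => f y + ‖y - x‖ ^ 2 / (2 * lam)) := by
  refine ⟨f (prox x) + ‖prox x - x‖ ^ 2 / (2 * lam), ?_⟩
  rintro _ ⟨y, rfl⟩
  exact hprox x (Set.mem_univ y)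

private lemma aux_env (hprox : ∀ x : H,
      IsMinOn (fun y => f y + ‖y - x‖ ^ 2 / (2 * lam)) Set.univ (prox x)) (x : H) :
    (⨅ y : H, f y + ‖y - x‖ ^ 2 / (2 * lam))
      = f (prox x) + ‖prox x - x‖ ^ 2 / (2 * lam) :=
  le_antisymm (ciInf_le (aux_bdd hprox x) (prox x))
    (le_ciInf fun y => hprox x (Set.mem_univ y))

private lemma aux_ub (hprox : ∀ x : H,
      IsMinOn (fun y => f y + ‖y - x‖ ^ 2 / (2 * lam)) Set.univ (prox x)) (x y : H) :
    (⨅ y : H, f y + ‖y - x‖ ^ 2 / (2 * lam)) ≤ f y + ‖y - x‖ ^ 2 / (2 * lam) :=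
  ciInf_le (aux_bdd hprox x) y

private lemma aux_key (hμ : 0 ≤ μ) (hf : StrongConvexOn Set.univ μ f) (hlam : 0 < lam)
    (hprox : ∀ x : H,
      IsMinOn (fun y => f y + ‖y - x‖ ^ 2 / (2 * lam)) Set.univ (prox x)) (x y : H) :
    f (prox x) + ‖prox x - x‖ ^ 2 / (2 * lam) + (μ + 1 / lam) / 2 * ‖y - prox x‖ ^ 2
      ≤ f y + ‖y - x‖ ^ 2 / (2 * lam) :=
  aux_strongMin (aux_Fstrong hf hlam x) (hprox x) y

private lemma aux_firm (hμ : 0 ≤ μ) (hf : StrongConvexOn Set.univ μ f) (hlam : 0 < lam)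
    (hprox : ∀ x : H,
      IsMinOn (fun y => f y + ‖y - x‖ ^ 2 / (2 * lam)) Set.univ (prox x)) (x₁ x₂ : H) :
    (1 + lam * μ) * ‖prox x₁ - prox x₂‖ ^ 2 ≤ ⟪prox x₁ - prox x₂, x₁ - x₂⟫_ℝ := by
  have h1 := aux_key hμ hf hlam hprox x₁ (prox x₂)
  have h2 := aux_key hμ hf hlam hprox x₂ (prox x₁)
  rw [show ‖prox x₂ - prox x₁‖ ^ 2 = ‖prox x₁ - prox x₂‖ ^ 2 by rw [norm_sub_rev]] at h1
  have key : ‖prox x₂ - x₁‖ ^ 2 - ‖prox x₁ - x₁‖ ^ 2 + ‖prox x₁ - x₂‖ ^ 2 - ‖prox x₂ - x₂‖ ^ 2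
      = 2 * ⟪prox x₁ - prox x₂, x₁ - x₂⟫_ℝ := by
    have e1 := norm_sub_sq_real (prox x₁) x₁
    have e2 := norm_sub_sq_real (prox x₂) x₁
    have e3 := norm_sub_sq_real (prox x₁) x₂
    have e4 := norm_sub_sq_real (prox x₂) x₂
    have e5 : ⟪prox x₁ - prox x₂, x₁ - x₂⟫_ℝ
        = ⟪prox x₁, x₁⟫_ℝ - ⟪prox x₁, x₂⟫_ℝ - ⟪prox x₂, x₁⟫_ℝ + ⟪prox x₂, x₂⟫_ℝ := by
      rw [inner_sub_left, inner_sub_right, inner_sub_right]; ring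
    linarith [e1, e2, e3, e4, e5]
  have h4 : (μ + 1 / lam) * ‖prox x₁ - prox x₂‖ ^ 2
      ≤ (2 * ⟪prox x₁ - prox x₂, x₁ - x₂⟫_ℝ) / (2 * lam) := by
    rw [← key,
      show (‖prox x₂ - x₁‖ ^ 2 - ‖prox x₁ - x₁‖ ^ 2 + ‖prox x₁ - x₂‖ ^ 2 - ‖prox x₂ - x₂‖ ^ 2)
          / (2 * lam)
        = ‖prox x₂ - x₁‖ ^ 2 / (2 * lam) - ‖prox x₁ - x₁‖ ^ 2 / (2 * lam)
          + ‖prox x₁ - x₂‖ ^ 2 / (2 * lam) - ‖prox x₂ - x₂‖ ^ 2 / (2 * lam) from by ring]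
    linarith [h1, h2]
  have hl : lam ≠ 0 := ne_of_gt hlam
  have h5 : (2 * ⟪prox x₁ - prox x₂, x₁ - x₂⟫_ℝ) / (2 * lam)
      = ⟪prox x₁ - prox x₂, x₁ - x₂⟫_ℝ / lam := by
    field_simp
  rw [h5, le_div_iff₀ hlam] at h4
  have h6 : (1 + lam * μ) * ‖prox x₁ - prox x₂‖ ^ 2
      = (μ + 1 / lam) * ‖prox x₁ - prox x₂‖ ^ 2 * lam := by
      linear_combination (-‖prox x₁ - prox x₂‖ ^ 2) * one_div_mul_cancel hl
  linarith [h4, h6]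

private lemma aux_nonexp (hμ : 0 ≤ μ) (hf : StrongConvexOn Set.univ μ f) (hlam : 0 < lam)
    (hprox : ∀ x : H,
      IsMinOn (fun y => f y + ‖y - x‖ ^ 2 / (2 * lam)) Set.univ (prox x)) (x₁ x₂ : H) :
    ‖prox x₁ - prox x₂‖ ≤ ‖x₁ - x₂‖ := by
  have h1 := aux_firm hμ hf hlam hprox x₁ x₂
  have h2 := real_inner_le_norm (prox x₁ - prox x₂) (x₁ - x₂)
  nlinarith [norm_nonneg (prox x₁ - prox x₂), norm_nonneg (x₁ - x₂),
    mul_nonneg hlam.le hμ]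

end L3

section L4
variable {H : Type*} [NormedAddCommGroup H] [InnerProductSpace ℝ H] [CompleteSpace H]
variable {μ : ℝ} {f : H → ℝ} {lam : ℝ} {prox : H → H}

private lemma aux_lip (hμ : 0 ≤ μ) (hf : StrongConvexOn Set.univ μ f) (hlam : 0 < lam)
    (hprox : ∀ x : H,
      IsMinOn (fun y => f y + ‖y - x‖ ^ 2 / (2 * lam)) Set.univ (prox x)) (x₁ x₂ : H) :
    ‖((1 + lam * μ) / lam) • (x₁ - prox x₁) - ((1 + lam * μ) / lam) • (x₂ - prox x₂)‖
      ≤ (μ + 1 / lam) * ‖x₁ - x₂‖ := by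
  have hκ : 0 < 1 + lam * μ := by nlinarith
  have hfirm := aux_firm hμ hf hlam hprox x₁ x₂
  have hmain : ‖(x₁ - x₂) - (prox x₁ - prox x₂)‖ ≤ ‖x₁ - x₂‖ := by
    have e1 := norm_sub_sq_real (x₁ - x₂) (prox x₁ - prox x₂)
    have e2 : ⟪x₁ - x₂, prox x₁ - prox x₂⟫_ℝ = ⟪prox x₁ - prox x₂, x₁ - x₂⟫_ℝ :=
      real_inner_comm _ _
    have hsq : ‖(x₁ - x₂) - (prox x₁ - prox x₂)‖ ^ 2 ≤ ‖x₁ - x₂‖ ^ 2 := by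
      nlinarith [hfirm, sq_nonneg ‖prox x₁ - prox x₂‖,
        mul_nonneg (mul_nonneg hlam.le hμ) (sq_nonneg ‖prox x₁ - prox x₂‖)]
    nlinarith [norm_nonneg ((x₁ - x₂) - (prox x₁ - prox x₂)), norm_nonneg (x₁ - x₂)]
  have harr : (x₁ - prox x₁) - (x₂ - prox x₂) = (x₁ - x₂) - (prox x₁ - prox x₂) := by abel
  rw [← smul_sub, harr, norm_smul, Real.norm_eq_abs, abs_of_pos (by positivity)]
  have heq : μ + 1 / lam = (1 + lam * μ) / lam := by field_simp; ring
  rw [heq]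
  exact mul_le_mul_of_nonneg_left hmain (by positivity)

set_option maxHeartbeats 1000000 in
private lemma aux_grad (hμ : 0 ≤ μ) (hf : StrongConvexOn Set.univ μ f) (hlam : 0 < lam)
    (hprox : ∀ x : H,
      IsMinOn (fun y => f y + ‖y - x‖ ^ 2 / (2 * lam)) Set.univ (prox x)) (x : H) :
    HasGradientAt (fun z => (1 + lam * μ) * (⨅ y : H, f y + ‖y - z‖ ^ 2 / (2 * lam)))
      (((1 + lam * μ) / lam) • (x - prox x)) x := by
  have hκ : 0 < 1 + lam * μ := by nlinarith
  have hCpos : 0 < 2 * (1 + lam * μ) / lam := by positivity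
  have key : ∀ z : H,
      |(1 + lam * μ) * (⨅ y : H, f y + ‖y - z‖ ^ 2 / (2 * lam))
        - (1 + lam * μ) * (⨅ y : H, f y + ‖y - x‖ ^ 2 / (2 * lam))
        - ⟪((1 + lam * μ) / lam) • (x - prox x), z - x⟫_ℝ|
      ≤ (2 * (1 + lam * μ) / lam) * ‖z - x‖ ^ 2 := by
    intro z
    have henvx := aux_env hprox x
    have henvz := aux_env hprox z
    have hub1 := aux_ub hprox z (prox x)
    have hub2 := aux_ub hprox x (prox z)
    have n1 : ‖prox x - z‖ ^ 2
        = ‖prox x - x‖ ^ 2 - 2 * ⟪prox x - x, z - x⟫_ℝ + ‖z - x‖ ^ 2 := by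
      rw [show prox x - z = (prox x - x) - (z - x) by abel, norm_sub_sq_real]
    have n2 : ‖prox z - z‖ ^ 2
        = ‖prox z - x‖ ^ 2 - 2 * ⟪prox z - x, z - x⟫_ℝ + ‖z - x‖ ^ 2 := by
      rw [show prox z - z = (prox z - x) - (z - x) by abel, norm_sub_sq_real]
    have ig : ⟪((1 + lam * μ) / lam) • (x - prox x), z - x⟫_ℝ
        = ((1 + lam * μ) / lam) * ⟪x - prox x, z - x⟫_ℝ := real_inner_smul_left _ _ _
    have isub : ⟪x - prox x, z - x⟫_ℝ = -⟪prox x - x, z - x⟫_ℝ := by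
      rw [show x - prox x = -(prox x - x) by abel, inner_neg_left]
    rw [ig, isub]
    -- upper bound
    have up1 : (⨅ y : H, f y + ‖y - z‖ ^ 2 / (2 * lam))
        - (⨅ y : H, f y + ‖y - x‖ ^ 2 / (2 * lam))
        ≤ (-(2 * ⟪prox x - x, z - x⟫_ℝ) + ‖z - x‖ ^ 2) / (2 * lam) := by
      rw [henvx]
      rw [n1] at hub1
      have r1 : (‖prox x - x‖ ^ 2 - 2 * ⟪prox x - x, z - x⟫_ℝ + ‖z - x‖ ^ 2) / (2 * lam)
          = ‖prox x - x‖ ^ 2 / (2 * lam)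
            + (-(2 * ⟪prox x - x, z - x⟫_ℝ) + ‖z - x‖ ^ 2) / (2 * lam) := by ring
      linarith [hub1, r1]
    have up2 := mul_le_mul_of_nonneg_left up1 hκ.le
    have r2 : (1 + lam * μ) * ((-(2 * ⟪prox x - x, z - x⟫_ℝ) + ‖z - x‖ ^ 2) / (2 * lam))
        + ((1 + lam * μ) / lam) * ⟪prox x - x, z - x⟫_ℝ
        = (1 + lam * μ) * ‖z - x‖ ^ 2 / (2 * lam) := by field_simp; ring
    have r3 : (1 + lam * μ) * ‖z - x‖ ^ 2 / (2 * lam)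
        + (3 * (1 + lam * μ) / (2 * lam)) * ‖z - x‖ ^ 2
        = (2 * (1 + lam * μ) / lam) * ‖z - x‖ ^ 2 := by ring
    have r3' : 0 ≤ (3 * (1 + lam * μ) / (2 * lam)) * ‖z - x‖ ^ 2 := by positivity
    -- lower bound
    have lo1 : (-(2 * ⟪prox z - x, z - x⟫_ℝ) + ‖z - x‖ ^ 2) / (2 * lam)
        ≤ (⨅ y : H, f y + ‖y - z‖ ^ 2 / (2 * lam))
          - (⨅ y : H, f y + ‖y - x‖ ^ 2 / (2 * lam)) := by
      rw [henvz, n2]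
      have r4 : (‖prox z - x‖ ^ 2 - 2 * ⟪prox z - x, z - x⟫_ℝ + ‖z - x‖ ^ 2) / (2 * lam)
          = ‖prox z - x‖ ^ 2 / (2 * lam)
            + (-(2 * ⟪prox z - x, z - x⟫_ℝ) + ‖z - x‖ ^ 2) / (2 * lam) := by ring
      linarith [hub2, r4]
    have lo2 := mul_le_mul_of_nonneg_left lo1 hκ.le
    have r5 : (1 + lam * μ) * ((-(2 * ⟪prox z - x, z - x⟫_ℝ) + ‖z - x‖ ^ 2) / (2 * lam))
        + ((1 + lam * μ) / lam) * ⟪prox x - x, z - x⟫_ℝ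
        = ((1 + lam * μ) / lam) * (⟪prox x - x, z - x⟫_ℝ - ⟪prox z - x, z - x⟫_ℝ)
          + (1 + lam * μ) * ‖z - x‖ ^ 2 / (2 * lam) := by field_simp; ring
    have idiff : ⟪prox x - x, z - x⟫_ℝ - ⟪prox z - x, z - x⟫_ℝ
        = ⟪prox x - prox z, z - x⟫_ℝ := by
      rw [← inner_sub_left]; congr 1; abel
    have ibnd : -(‖z - x‖ ^ 2) ≤ ⟪prox x - prox z, z - x⟫_ℝ := by
      have cs := real_inner_le_norm (prox z - prox x) (z - x)
      have hneg : ⟪prox x - prox z, z - x⟫_ℝ = -⟪prox z - prox x, z - x⟫_ℝ := by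
        rw [show prox x - prox z = -(prox z - prox x) by abel, inner_neg_left]
      have hne := aux_nonexp hμ hf hlam hprox z x
      have hmm := mul_le_mul_of_nonneg_right hne (norm_nonneg (z - x))
      nlinarith [cs, hmm]
    have hmul : ((1 + lam * μ) / lam) * (-(‖z - x‖ ^ 2))
        ≤ ((1 + lam * μ) / lam) * ⟪prox x - prox z, z - x⟫_ℝ :=
      mul_le_mul_of_nonneg_left ibnd (by positivity)
    have r6 : ((1 + lam * μ) / lam) * (-(‖z - x‖ ^ 2))
        + (1 + lam * μ) * ‖z - x‖ ^ 2 / (2 * lam)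
        + (3 * (1 + lam * μ) / (2 * lam)) * ‖z - x‖ ^ 2
        = (1 + lam * μ) * ‖z - x‖ ^ 2 / lam := by ring
    rw [abs_le]
    constructor
    · have hr : ((1 + lam * μ) / lam) * (-(‖z - x‖ ^ 2))
            + (1 + lam * μ) * ‖z - x‖ ^ 2 / (2 * lam)
            + (2 * (1 + lam * μ) / lam) * ‖z - x‖ ^ 2
          = (3 * (1 + lam * μ) / (2 * lam)) * ‖z - x‖ ^ 2 := by ring
      have : -((2 * (1 + lam * μ) / lam) * ‖z - x‖ ^ 2)
          ≤ ((1 + lam * μ) / lam) * (-(‖z - x‖ ^ 2))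
            + (1 + lam * μ) * ‖z - x‖ ^ 2 / (2 * lam) := by
        linarith [hr, r3']
      rw [idiff] at r5
      linarith [lo2, r5, hmul, this]
    · linarith [up2, r2, r3, r3']
  -- conclude via little-o
  rw [hasGradientAt_iff_isLittleO, Asymptotics.isLittleO_iff]
  intro ε hε
  filter_upwards [Metric.ball_mem_nhds x (show 0 < ε / (2 * (1 + lam * μ) / lam) by positivity)]
    with z hz
  rw [Metric.mem_ball, dist_eq_norm] at hz
  have h1 := key z
  rw [Real.norm_eq_abs]
  calc |(1 + lam * μ) * (⨅ y : H, f y + ‖y - z‖ ^ 2 / (2 * lam))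
        - (1 + lam * μ) * (⨅ y : H, f y + ‖y - x‖ ^ 2 / (2 * lam))
        - ⟪((1 + lam * μ) / lam) • (x - prox x), z - x⟫_ℝ|
      ≤ (2 * (1 + lam * μ) / lam) * ‖z - x‖ ^ 2 := h1
    _ ≤ ε * ‖z - x‖ := by
        have hz2 : (2 * (1 + lam * μ) / lam) * ‖z - x‖ ≤ ε := (le_div_iff₀' hCpos).mp hz.le
        nlinarith [hz2, norm_nonneg (z - x)]

end L4

section L5
variable {H : Type*} [NormedAddCommGroup H] [InnerProductSpace ℝ H]
variable {μ : ℝ} {f : H → ℝ} {lam : ℝ} {prox : H → H}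

set_option maxHeartbeats 1000000 in
private lemma aux_sc (hμ : 0 ≤ μ) (hf : StrongConvexOn Set.univ μ f) (hlam : 0 < lam)
    (hprox : ∀ x : H,
      IsMinOn (fun y => f y + ‖y - x‖ ^ 2 / (2 * lam)) Set.univ (prox x)) :
    StrongConvexOn Set.univ μ
      (fun x => (1 + lam * μ) * (⨅ y : H, f y + ‖y - x‖ ^ 2 / (2 * lam))) := by
  have hκ : 0 < 1 + lam * μ := by nlinarith
  refine ⟨convex_univ, ?_⟩
  intro x₁ _ x₂ _ a b ha hb hab
  simp only [smul_eq_mul]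
  have henv1 := aux_env hprox x₁
  have henv2 := aux_env hprox x₂
  have hub := aux_ub hprox (a • x₁ + b • x₂) (a • prox x₁ + b • prox x₂)
  have hfs := hf.2 (Set.mem_univ (prox x₁)) (Set.mem_univ (prox x₂)) ha hb hab
  simp only [smul_eq_mul] at hfs
  have hcomb : a • prox x₁ + b • prox x₂ - (a • x₁ + b • x₂)
      = a • (prox x₁ - x₁) + b • (prox x₂ - x₂) := by
    rw [smul_sub, smul_sub]; abel
  have hsq := aux_sqCombo (prox x₁ - x₁) (prox x₂ - x₂) hab
  rw [show (prox x₁ - x₁) - (prox x₂ - x₂) = (prox x₁ - prox x₂) - (x₁ - x₂) by abel] at hsq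
  rw [hcomb, hsq] at hub
  -- quadratic inequality : μ/2 D ≤ κ (μ/2 Q + W/(2 lam))
  have e1 := norm_sub_sq_real (prox x₁ - prox x₂) (x₁ - x₂)
  have e3 : ‖(1 + lam * μ) • (prox x₁ - prox x₂) - (x₁ - x₂)‖ ^ 2
      = (1 + lam * μ) ^ 2 * ‖prox x₁ - prox x₂‖ ^ 2
        - 2 * (1 + lam * μ) * ⟪prox x₁ - prox x₂, x₁ - x₂⟫_ℝ + ‖x₁ - x₂‖ ^ 2 := by
    rw [norm_sub_sq_real, real_inner_smul_left, norm_smul, Real.norm_eq_abs, mul_pow, sq_abs]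
    ring
  have hq0 : 0 ≤ (1 + lam * μ) ^ 2 * ‖prox x₁ - prox x₂‖ ^ 2
      - 2 * (1 + lam * μ) * ⟪prox x₁ - prox x₂, x₁ - x₂⟫_ℝ + ‖x₁ - x₂‖ ^ 2 := by
    rw [← e3]; positivity
  have cleared : lam * μ * ‖x₁ - x₂‖ ^ 2
      ≤ lam * (1 + lam * μ) * μ * ‖prox x₁ - prox x₂‖ ^ 2
        + (1 + lam * μ) * ‖(prox x₁ - prox x₂) - (x₁ - x₂)‖ ^ 2 := by
    rw [e1]; nlinarith [hq0]
  have hquad : μ / 2 * ‖x₁ - x₂‖ ^ 2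
      ≤ (1 + lam * μ) * (μ / 2 * ‖prox x₁ - prox x₂‖ ^ 2
          + ‖(prox x₁ - prox x₂) - (x₁ - x₂)‖ ^ 2 / (2 * lam)) := by
    have i1 : μ / 2 * ‖x₁ - x₂‖ ^ 2 = (lam * μ * ‖x₁ - x₂‖ ^ 2) / (2 * lam) := by
      field_simp
    have i2 : (1 + lam * μ) * (μ / 2 * ‖prox x₁ - prox x₂‖ ^ 2
          + ‖(prox x₁ - prox x₂) - (x₁ - x₂)‖ ^ 2 / (2 * lam))
        = (lam * (1 + lam * μ) * μ * ‖prox x₁ - prox x₂‖ ^ 2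
            + (1 + lam * μ) * ‖(prox x₁ - prox x₂) - (x₁ - x₂)‖ ^ 2) / (2 * lam) := by
      field_simp
    rw [i1, i2]
    exact (div_le_div_iff_of_pos_right (by positivity)).mpr cleared
  -- combine
  have rdist : (a * ‖prox x₁ - x₁‖ ^ 2 + b * ‖prox x₂ - x₂‖ ^ 2
        - a * b * ‖(prox x₁ - prox x₂) - (x₁ - x₂)‖ ^ 2) / (2 * lam)
      = a * (‖prox x₁ - x₁‖ ^ 2 / (2 * lam)) + b * (‖prox x₂ - x₂‖ ^ 2 / (2 * lam))
        - a * b * (‖(prox x₁ - prox x₂) - (x₁ - x₂)‖ ^ 2 / (2 * lam)) := by ring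
  have m1 : (⨅ y : H, f y + ‖y - (a • x₁ + b • x₂)‖ ^ 2 / (2 * lam))
      ≤ a * (⨅ y : H, f y + ‖y - x₁‖ ^ 2 / (2 * lam))
        + b * (⨅ y : H, f y + ‖y - x₂‖ ^ 2 / (2 * lam))
        - a * b * (μ / 2 * ‖prox x₁ - prox x₂‖ ^ 2
            + ‖(prox x₁ - prox x₂) - (x₁ - x₂)‖ ^ 2 / (2 * lam)) := by
    rw [henv1, henv2]
    have expand : a * (f (prox x₁) + ‖prox x₁ - x₁‖ ^ 2 / (2 * lam))
          + b * (f (prox x₂) + ‖prox x₂ - x₂‖ ^ 2 / (2 * lam))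
        = a * f (prox x₁) + b * f (prox x₂) + a * (‖prox x₁ - x₁‖ ^ 2 / (2 * lam))
          + b * (‖prox x₂ - x₂‖ ^ 2 / (2 * lam)) := by ring
    have mulsplit : a * b * (μ / 2 * ‖prox x₁ - prox x₂‖ ^ 2
          + ‖(prox x₁ - prox x₂) - (x₁ - x₂)‖ ^ 2 / (2 * lam))
        = a * b * (μ / 2 * ‖prox x₁ - prox x₂‖ ^ 2)
          + a * b * (‖(prox x₁ - prox x₂) - (x₁ - x₂)‖ ^ 2 / (2 * lam)) := by ring
    linarith [hub, hfs, rdist, expand, mulsplit]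
  have m2 := mul_le_mul_of_nonneg_left m1 hκ.le
  have m4 := mul_le_mul_of_nonneg_left hquad (mul_nonneg ha hb)
  have m5 : (1 + lam * μ) * (a * (⨅ y : H, f y + ‖y - x₁‖ ^ 2 / (2 * lam))
        + b * (⨅ y : H, f y + ‖y - x₂‖ ^ 2 / (2 * lam))
        - a * b * (μ / 2 * ‖prox x₁ - prox x₂‖ ^ 2
            + ‖(prox x₁ - prox x₂) - (x₁ - x₂)‖ ^ 2 / (2 * lam)))
      = a * ((1 + lam * μ) * (⨅ y : H, f y + ‖y - x₁‖ ^ 2 / (2 * lam)))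
        + b * ((1 + lam * μ) * (⨅ y : H, f y + ‖y - x₂‖ ^ 2 / (2 * lam)))
        - a * b * ((1 + lam * μ) * (μ / 2 * ‖prox x₁ - prox x₂‖ ^ 2
            + ‖(prox x₁ - prox x₂) - (x₁ - x₂)‖ ^ 2 / (2 * lam))) := by ring
  have m6 : a * b * (μ / 2 * ‖x₁ - x₂‖ ^ 2)
      ≤ a * b * ((1 + lam * μ) * (μ / 2 * ‖prox x₁ - prox x₂‖ ^ 2
          + ‖(prox x₁ - prox x₂) - (x₁ - x₂)‖ ^ 2 / (2 * lam))) := by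
    calc a * b * (μ / 2 * ‖x₁ - x₂‖ ^ 2) = (a * b) * (μ / 2 * ‖x₁ - x₂‖ ^ 2) := by ring
      _ ≤ (a * b) * ((1 + lam * μ) * (μ / 2 * ‖prox x₁ - prox x₂‖ ^ 2
          + ‖(prox x₁ - prox x₂) - (x₁ - x₂)‖ ^ 2 / (2 * lam))) := m4
  linarith [m2, m5, m6]

end L5


/-- If `f` is μ-strongly convex, then `(1+λμ) f_λ` is μ-strongly convex, its gradient at `x`
is `((1+λμ)/λ)(x - prox_{λf}(x))`, and this gradient is `(μ + 1/λ)`-Lipschitz. -/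
theorem stmt_4 {H : Type*} [NormedAddCommGroup H] [InnerProductSpace ℝ H]
    [CompleteSpace H]
    (μ : ℝ) (hμ : 0 ≤ μ)
    (f : H → ℝ) (hf : StrongConvexOn Set.univ μ f) (hlsc : LowerSemicontinuous f)
    (lam : ℝ) (hlam : 0 < lam)
    (prox : H → H)
    (hprox : ∀ x : H,
      IsMinOn (fun y => f y + ‖y - x‖ ^ 2 / (2 * lam)) Set.univ (prox x)) :
    StrongConvexOn Set.univ μ
      (fun x => (1 + lam * μ) * (⨅ y : H, f y + ‖y - x‖ ^ 2 / (2 * lam))) ∧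
    (∀ x : H,
      HasGradientAt
        (fun z => (1 + lam * μ) * (⨅ y : H, f y + ‖y - z‖ ^ 2 / (2 * lam)))
        (((1 + lam * μ) / lam) • (x - prox x)) x) ∧
    (∀ x₁ x₂ : H,
      ‖((1 + lam * μ) / lam) • (x₁ - prox x₁) - ((1 + lam * μ) / lam) • (x₂ - prox x₂)‖
        ≤ (μ + 1 / lam) * ‖x₁ - x₂‖) := by
  exact ⟨aux_sc hμ hf hlam hprox, fun x => aux_grad hμ hf hlam hprox x,
    fun x₁ x₂ => aux_lip hμ hf hlam hprox x₁ x₂⟩
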